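/- Let A ⊆ F_p with 0 ∉ A, let b₀ ∈ A, let N ≥ 1 with |b₀A ∩ aᵢA| ≥ N for i = 1,2,3,4 where a₁,a₂,a₃,a₄ ∈ A. Then |a₁A - a₂A + a₃A - a₄A| ≤ |A+A|⁸ / (N⁴|A|³). -/

import Mathlib

open Finset Pointwise

private lemma smul_finset_add_distrib {p : ℕ} (a : ZMod p) (s t : Finset (ZMod p)) :
    a • (s + t) = a • s + a • t := by
  ext x
  simp only [Finset.mem_smul_finset, Finset.mem_add]
  constructor
  · rintro ⟨y, ⟨u, hu, v, hv, rfl⟩, rfl⟩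
    exact ⟨a • u, ⟨u, hu, rfl⟩, a • v, ⟨v, hv, rfl⟩, by simp [smul_eq_mul, mul_add]⟩
  · rintro ⟨-, ⟨u, hu, rfl⟩, -, ⟨v, hv, rfl⟩, rfl⟩
    exact ⟨u + v, ⟨u, hu, v, hv, rfl⟩, by simp [smul_eq_mul, mul_add]⟩

private lemma card_smul_finset₀ {p : ℕ} [Fact p.Prime] {a : ZMod p} (ha : a ≠ 0)
    (s : Finset (ZMod p)) : (a • s).card = s.card := by
  rw [Finset.smul_finset_def]
  exact Finset.card_image_of_injective s (MulAction.injective₀ ha)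

theorem four_fold_sumset_bound {p : ℕ} [Fact p.Prime]
    (A : Finset (ZMod p)) (h0 : (0 : ZMod p) ∉ A)
    (b₀ a₁ a₂ a₃ a₄ : ZMod p) (hb₀ : b₀ ∈ A)
    (ha₁ : a₁ ∈ A) (ha₂ : a₂ ∈ A) (ha₃ : a₃ ∈ A) (ha₄ : a₄ ∈ A)
    (N : ℕ) (hN : 1 ≤ N)
    (h₁ : N ≤ (b₀ • A ∩ a₁ • A).card) (h₂ : N ≤ (b₀ • A ∩ a₂ • A).card)
    (h₃ : N ≤ (b₀ • A ∩ a₃ • A).card) (h₄ : N ≤ (b₀ • A ∩ a₄ • A).card) :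
    ((a₁ • A - a₂ • A + a₃ • A - a₄ • A).card : ℝ) ≤
      (A + A).card ^ 8 / ((N : ℝ) ^ 4 * A.card ^ 3) := by
  have hb₀ne : b₀ ≠ 0 := fun h => h0 (h ▸ hb₀)
  have ha₁ne : a₁ ≠ 0 := fun h => h0 (h ▸ ha₁)
  have ha₂ne : a₂ ≠ 0 := fun h => h0 (h ▸ ha₂)
  have ha₃ne : a₃ ≠ 0 := fun h => h0 (h ▸ ha₃)
  have ha₄ne : a₄ ≠ 0 := fun h => h0 (h ▸ ha₄)
  have hAne : A.Nonempty := ⟨b₀, hb₀⟩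
  set X : Finset (ZMod p) := b₀ • A with hX
  set C₁ : Finset (ZMod p) := X ∩ a₁ • A with hC₁
  set C₂ : Finset (ZMod p) := X ∩ a₂ • A with hC₂
  set C₃ : Finset (ZMod p) := X ∩ a₃ • A with hC₃
  set C₄ : Finset (ZMod p) := X ∩ a₄ • A with hC₄
  have hk : ∀ a : ZMod p, a ≠ 0 → (a • A + a • A).card = (A + A).card := by
    intro a ha
    rw [← smul_finset_add_distrib, card_smul_finset₀ ha]
  -- Step 1 : strip a₄
  have s1 : (a₁ • A - a₂ • A + a₃ • A - a₄ • A).card * C₄.card ≤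
      (a₁ • A - a₂ • A + a₃ • A + X).card * (A + A).card := by
    calc (a₁ • A - a₂ • A + a₃ • A - a₄ • A).card * C₄.card
        ≤ ((a₁ • A - a₂ • A + a₃ • A) + C₄).card * (a₄ • A + C₄).card :=
          Finset.ruzsa_triangle_inequality_sub_add_add _ _ _
      _ ≤ (a₁ • A - a₂ • A + a₃ • A + X).card * (A + A).card := by
          refine Nat.mul_le_mul (card_le_card (add_subset_add_left inter_subset_left)) ?_
          rw [← hk a₄ ha₄ne]
          exact card_le_card (add_subset_add_left inter_subset_right)
  -- Step 2 : strip a₃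
  have e1 : a₁ • A - a₂ • A + a₃ • A + X = (a₁ • A - a₂ • A + X) + a₃ • A :=
    add_right_comm _ _ _
  have s2 : (a₁ • A - a₂ • A + a₃ • A + X).card * C₃.card ≤
      (a₁ • A - a₂ • A + X + X).card * (A + A).card := by
    rw [e1]
    calc ((a₁ • A - a₂ • A + X) + a₃ • A).card * C₃.card
        ≤ ((a₁ • A - a₂ • A + X) + C₃).card * (C₃ + a₃ • A).card :=
          Finset.ruzsa_triangle_inequality_add_add_add _ _ _
      _ ≤ (a₁ • A - a₂ • A + X + X).card * (A + A).card := by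
          refine Nat.mul_le_mul (card_le_card (add_subset_add_left inter_subset_left)) ?_
          rw [← hk a₃ ha₃ne]
          exact card_le_card (add_subset_add_right inter_subset_right)
  -- Step 3 : strip a₂
  have e2 : a₁ • A - a₂ • A + X + X = (a₁ • A + X + X) - a₂ • A := by
    rw [sub_eq_add_neg, sub_eq_add_neg, add_right_comm (a₁ • A) (-(a₂ • A)) X,
      add_right_comm (a₁ • A + X) (-(a₂ • A)) X]
  have s3 : (a₁ • A - a₂ • A + X + X).card * C₂.card ≤
      (a₁ • A + X + X + X).card * (A + A).card := by
    rw [e2]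
    calc ((a₁ • A + X + X) - a₂ • A).card * C₂.card
        ≤ ((a₁ • A + X + X) + C₂).card * (a₂ • A + C₂).card :=
          Finset.ruzsa_triangle_inequality_sub_add_add _ _ _
      _ ≤ (a₁ • A + X + X + X).card * (A + A).card := by
          refine Nat.mul_le_mul (card_le_card (add_subset_add_left inter_subset_left)) ?_
          rw [← hk a₂ ha₂ne]
          exact card_le_card (add_subset_add_left inter_subset_right)
  -- Step 4 : strip a₁
  have e3 : a₁ • A + X + X + X = (X + X + X) + a₁ • A := by
    rw [add_comm (a₁ • A) X, add_right_comm X (a₁ • A) X, add_right_comm (X + X) (a₁ • A) X]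
  have s4 : (a₁ • A + X + X + X).card * C₁.card ≤
      (X + X + X + X).card * (A + A).card := by
    rw [e3]
    calc ((X + X + X) + a₁ • A).card * C₁.card
        ≤ ((X + X + X) + C₁).card * (C₁ + a₁ • A).card :=
          Finset.ruzsa_triangle_inequality_add_add_add _ _ _
      _ ≤ (X + X + X + X).card * (A + A).card := by
          refine Nat.mul_le_mul (card_le_card (add_subset_add_left inter_subset_left)) ?_
          rw [← hk a₁ ha₁ne]
          exact card_le_card (add_subset_add_right inter_subset_right)
  -- Step 5 : Plünnecke–Ruzsa for X + X + X + X
  have e4 : X + X + X + X = b₀ • (A + A + A + A) := by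
    rw [smul_finset_add_distrib, smul_finset_add_distrib, smul_finset_add_distrib]
  have h4smul : (4 : ℕ) • A = A + A + A + A := by
    rw [show (4 : ℕ) = 3 + 1 from rfl, succ_nsmul, show (3 : ℕ) = 2 + 1 from rfl, succ_nsmul,
      show (2 : ℕ) = 1 + 1 from rfl, succ_nsmul, one_nsmul]
  have hA0 : ((A.card : ℚ≥0)) ≠ 0 := by
    simpa using hAne.card_pos.ne'
  have s5 : (X + X + X + X).card * A.card ^ 3 ≤ (A + A).card ^ 4 := by
    rw [e4, card_smul_finset₀ hb₀ne]
    have hq := Finset.pluennecke_ruzsa_inequality_nsmul_add hAne A 4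
    rw [h4smul] at hq
    have hq2 : ((A + A + A + A).card : ℚ≥0) * A.card ^ 3 ≤ (A + A).card ^ 4 := by
      calc ((A + A + A + A).card : ℚ≥0) * A.card ^ 3
          ≤ (((A + A).card / A.card : ℚ≥0) ^ 4 * A.card) * A.card ^ 3 :=
            mul_le_mul_left hq _
        _ = ((A + A).card : ℚ≥0) ^ 4 := by field_simp
    exact_mod_cast hq2
  -- Combine everything over ℕ
  have hc : N ^ 4 ≤ C₄.card * C₃.card * C₂.card * C₁.card := by
    calc N ^ 4 = N * N * N * N := by ring
      _ ≤ C₄.card * C₃.card * C₂.card * C₁.card :=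
        Nat.mul_le_mul (Nat.mul_le_mul (Nat.mul_le_mul h₄ h₃) h₂) h₁
  have key : (a₁ • A - a₂ • A + a₃ • A - a₄ • A).card * N ^ 4 * A.card ^ 3 ≤
      (A + A).card ^ 8 := by
    calc (a₁ • A - a₂ • A + a₃ • A - a₄ • A).card * N ^ 4 * A.card ^ 3
        ≤ (a₁ • A - a₂ • A + a₃ • A - a₄ • A).card *
            (C₄.card * C₃.card * C₂.card * C₁.card) * A.card ^ 3 :=
          mul_le_mul_left (mul_le_mul_right hc _) _
      _ = ((a₁ • A - a₂ • A + a₃ • A - a₄ • A).card * C₄.card) *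
            C₃.card * C₂.card * C₁.card * A.card ^ 3 := by ring
      _ ≤ ((a₁ • A - a₂ • A + a₃ • A + X).card * (A + A).card) *
            C₃.card * C₂.card * C₁.card * A.card ^ 3 :=
          mul_le_mul_left (mul_le_mul_left (mul_le_mul_left (mul_le_mul_left s1 _) _) _) _
      _ = ((a₁ • A - a₂ • A + a₃ • A + X).card * C₃.card) * (A + A).card *
            C₂.card * C₁.card * A.card ^ 3 := by ring
      _ ≤ ((a₁ • A - a₂ • A + X + X).card * (A + A).card) * (A + A).card *
            C₂.card * C₁.card * A.card ^ 3 :=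
          mul_le_mul_left (mul_le_mul_left (mul_le_mul_left (mul_le_mul_left s2 _) _) _) _
      _ = ((a₁ • A - a₂ • A + X + X).card * C₂.card) * (A + A).card ^ 2 *
            C₁.card * A.card ^ 3 := by ring
      _ ≤ ((a₁ • A + X + X + X).card * (A + A).card) * (A + A).card ^ 2 *
            C₁.card * A.card ^ 3 :=
          mul_le_mul_left (mul_le_mul_left (mul_le_mul_left s3 _) _) _
      _ = ((a₁ • A + X + X + X).card * C₁.card) * (A + A).card ^ 3 * A.card ^ 3 := by ring
      _ ≤ ((X + X + X + X).card * (A + A).card) * (A + A).card ^ 3 * A.card ^ 3 :=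
          mul_le_mul_left (mul_le_mul_left s4 _) _
      _ = ((X + X + X + X).card * A.card ^ 3) * (A + A).card ^ 4 := by ring
      _ ≤ (A + A).card ^ 4 * (A + A).card ^ 4 := mul_le_mul_left s5 _
      _ = (A + A).card ^ 8 := by ring
  -- Pass to the reals
  have hApos : 0 < A.card := hAne.card_pos
  have hden : (0 : ℝ) < (N : ℝ) ^ 4 * (A.card : ℝ) ^ 3 := by
    have h1 : (0 : ℝ) < (N : ℝ) := by exact_mod_cast hN
    have h2 : (0 : ℝ) < (A.card : ℝ) := by exact_mod_cast hApos
    positivity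
  rw [le_div_iff₀ hden]
  have hkey : ((a₁ • A - a₂ • A + a₃ • A - a₄ • A).card : ℝ) * (N : ℝ) ^ 4 *
      (A.card : ℝ) ^ 3 ≤ ((A + A).card : ℝ) ^ 8 := by exact_mod_cast key
  calc ((a₁ • A - a₂ • A + a₃ • A - a₄ • A).card : ℝ) * ((N : ℝ) ^ 4 * (A.card : ℝ) ^ 3)
      = ((a₁ • A - a₂ • A + a₃ • A - a₄ • A).card : ℝ) * (N : ℝ) ^ 4 * (A.card : ℝ) ^ 3 := by
        ring
    _ ≤ ((A + A).card : ℝ) ^ 8 := hkey
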